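/- arXiv:2512.08607 — 2 statements merged into one kernel-verified Lean document; each statement's English description precedes it below -/
import Mathlib

section
/- Under the stronger pointwise CBF condition db(x; f(x,u)) ≥ −α(b(x)) holding for all u ∈ U and all x, and with dynamics equivariant under the diffeomorphism D(·;p), the transformed function b_p(x) := b(D(x;p)) satisfies db_p(x; f(x,u)) ≥ −α(b_p(x)) for all u ∈ U and all x. -/
open Filter

/-- Lower Dini directional derivative. -/
noncomputable def dini {E : Type*} [NormedAddCommGroup E] [NormedSpace ℝ E]
    (b : E → ℝ) (x v : E) : ℝ :=
  Filter.liminf (fun ε : ℝ => (b (x + ε • v) - b x) / ε) (nhdsWithin 0 (Set.Ioi 0))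

/-- Transformed CBFs via equivariances (pointwise form). -/
theorem cbf_of_equivariance_pointwise {n m : ℕ}
    (f : EuclideanSpace ℝ (Fin n) → EuclideanSpace ℝ (Fin m) → EuclideanSpace ℝ (Fin n))
    (U : Set (EuclideanSpace ℝ (Fin m)))
    (D : EuclideanSpace ℝ (Fin n) → EuclideanSpace ℝ (Fin n))
    (JD : EuclideanSpace ℝ (Fin n) → (EuclideanSpace ℝ (Fin n) →L[ℝ] EuclideanSpace ℝ (Fin n)))
    (hD : ∀ x, HasFDerivAt D (JD x) x)
    (Du : EuclideanSpace ℝ (Fin m) → EuclideanSpace ℝ (Fin m))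
    (hDu : ∀ u ∈ U, Du u ∈ U)
    (hequiv : ∀ x, ∀ u ∈ U, JD x (f x u) = f (D x) (Du u))
    (b : EuclideanSpace ℝ (Fin n) → ℝ) (hb : LocallyLipschitz b)
    (α : ℝ → ℝ) (hα_cont : Continuous α) (hα_mono : StrictMono α) (hα0 : α 0 = 0)
    (hcbf : ∀ x, ∀ u ∈ U, dini b x (f x u) ≥ -α (b x)) :
    ∀ x, ∀ u ∈ U, dini (fun y => b (D y)) x (f x u) ≥ -α (b (D x)) := by
  intro x u hu
  set v : EuclideanSpace ℝ (Fin n) := f x u with hv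
  set w : EuclideanSpace ℝ (Fin n) := JD x v with hw
  -- the curve ε ↦ D (x + ε • v)
  set g : ℝ → EuclideanSpace ℝ (Fin n) := fun ε => D (x + ε • v) with hg
  have hline : HasDerivAt (fun ε : ℝ => x + ε • v) v 0 := by
    simpa using ((hasDerivAt_id (0 : ℝ)).smul_const v).const_add x
  have hgd : HasDerivAt g w 0 := by
    have := (hD (x + (0 : ℝ) • v)).comp_hasDerivAt 0 hline
    simp only [zero_smul, add_zero] at this
    exact this
  have hslope : Tendsto (fun ε : ℝ => ε⁻¹ • (g ε - g 0)) (nhdsWithin 0 (Set.Ioi 0)) (nhds w) :=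
    by simpa using hgd.tendsto_slope_zero_right
  -- local Lipschitz constant of b near D x
  obtain ⟨K, s, hs, hK⟩ := hb (D x)
  have hg0 : g 0 = D x := by simp [hg]
  -- eventually both points are in s
  have hgmem : ∀ᶠ ε in nhdsWithin (0:ℝ) (Set.Ioi 0), g ε ∈ s := by
    have hc : ContinuousAt g 0 := hgd.continuousAt
    exact nhdsWithin_le_nhds (hc.preimage_mem_nhds (by rw [hg0]; exact hs))
  have hwmem : ∀ᶠ ε in nhdsWithin (0:ℝ) (Set.Ioi 0), D x + ε • w ∈ s := by
    have hc : ContinuousAt (fun ε : ℝ => D x + ε • w) 0 := by fun_prop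
    exact nhdsWithin_le_nhds (hc.preimage_mem_nhds (by simpa using hs))
  have hpos : ∀ᶠ ε in nhdsWithin (0:ℝ) (Set.Ioi 0), (0 : ℝ) < ε :=
    eventually_mem_nhdsWithin
  -- difference term tends to 0
  set d : ℝ → ℝ := fun ε => (b (g ε) - b (D x + ε • w)) / ε with hd
  have hdT : Tendsto d (nhdsWithin 0 (Set.Ioi 0)) (nhds 0) := by
    have hbound : Tendsto (fun ε : ℝ => (K : ℝ) * ‖ε⁻¹ • (g ε - g 0) - w‖)
        (nhdsWithin 0 (Set.Ioi 0)) (nhds 0) := by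
      have := (hslope.sub_const w).norm.const_mul (K : ℝ)
      simpa using this
    refine squeeze_zero_norm' ?_ hbound
    filter_upwards [hgmem, hwmem, hpos] with ε h1 h2 h3
    have hKb : dist (b (g ε)) (b (D x + ε • w)) ≤ K * dist (g ε) (D x + ε • w) :=
      hK.dist_le_mul _ h1 _ h2
    have hεne : (ε : ℝ) ≠ 0 := ne_of_gt h3
    have : ‖d ε‖ = dist (b (g ε)) (b (D x + ε • w)) / ε := by
      rw [Real.dist_eq, hd]
      simp [abs_div, abs_of_pos h3]
    rw [this]
    rw [div_le_iff₀ h3]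
    have heq : g ε - (D x + ε • w) = ε • (ε⁻¹ • (g ε - g 0) - w) := by
      rw [smul_sub, smul_smul, mul_inv_cancel₀ hεne, one_smul, hg0]
      abel
    calc dist (b (g ε)) (b (D x + ε • w)) ≤ K * dist (g ε) (D x + ε • w) := hKb
      _ = K * ‖ε⁻¹ • (g ε - g 0) - w‖ * ε := by
          rw [dist_eq_norm, heq, norm_smul_of_nonneg h3.le]; ring
  -- the reference quotient at D x in direction w
  set q2 : ℝ → ℝ := fun ε => (b (D x + ε • w) - b (D x)) / ε with hq2
  have hq2bdd : ∀ᶠ ε in nhdsWithin (0:ℝ) (Set.Ioi 0), |q2 ε| ≤ K * ‖w‖ := by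
    filter_upwards [hwmem, hpos] with ε h2 h3
    have hs0 : D x ∈ s := mem_of_mem_nhds hs
    have hKb : dist (b (D x + ε • w)) (b (D x)) ≤ K * dist (D x + ε • w) (D x) :=
      hK.dist_le_mul _ h2 _ hs0
    have : |q2 ε| = dist (b (D x + ε • w)) (b (D x)) / ε := by
      rw [Real.dist_eq, hq2, abs_div, abs_of_pos h3]
    rw [this, div_le_iff₀ h3]
    calc dist (b (D x + ε • w)) (b (D x)) ≤ K * dist (D x + ε • w) (D x) := hKb
      _ = K * ‖w‖ * ε := by
          rw [dist_eq_norm, add_sub_cancel_left, norm_smul, Real.norm_eq_abs,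
            abs_of_pos h3]; ring
  have hbdd_le : IsBoundedUnder (· ≤ ·) (nhdsWithin (0:ℝ) (Set.Ioi 0)) q2 :=
    ⟨K * ‖w‖, Filter.eventually_map.2 (by filter_upwards [hq2bdd] with ε h using le_of_abs_le h)⟩
  have hbdd_ge : IsBoundedUnder (· ≥ ·) (nhdsWithin (0:ℝ) (Set.Ioi 0)) q2 :=
    ⟨-(K * ‖w‖), Filter.eventually_map.2 (by filter_upwards [hq2bdd] with ε h using neg_le_of_abs_le h)⟩
  have hcob : IsCoboundedUnder (· ≥ ·) (nhdsWithin (0:ℝ) (Set.Ioi 0)) q2 :=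
    hbdd_le.isCoboundedUnder_ge
  -- liminf superadditivity
  have hsum : liminf d (nhdsWithin (0:ℝ) (Set.Ioi 0)) + liminf q2 (nhdsWithin (0:ℝ) (Set.Ioi 0))
      ≤ liminf (d + q2) (nhdsWithin (0:ℝ) (Set.Ioi 0)) :=
    le_liminf_add hdT.isBoundedUnder_ge hdT.isBoundedUnder_le hbdd_ge hcob
  have hld : liminf d (nhdsWithin (0:ℝ) (Set.Ioi 0)) = 0 := hdT.liminf_eq
  have hsplit : (d + q2) = fun ε : ℝ => (b (D (x + ε • v)) - b (D x)) / ε := by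
    funext ε
    simp only [Pi.add_apply, hd, hq2, hg, hg0]
    rw [← add_div]
    ring_nf
  have hmain : dini b (D x) w ≤ dini (fun y => b (D y)) x v := by
    have : dini (fun y => b (D y)) x v =
        liminf (d + q2) (nhdsWithin (0:ℝ) (Set.Ioi 0)) := by
      rw [hsplit]; rfl
    rw [this]
    calc dini b (D x) w = liminf q2 (nhdsWithin (0:ℝ) (Set.Ioi 0)) := rfl
      _ ≤ _ := by rw [hld, zero_add] at hsum; exact hsum
  have hkey : dini b (D x) w ≥ -α (b (D x)) := by
    have := hcbf (D x) (Du u) (hDu u hu)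
    rwa [← hequiv x u hu] at this
  exact le_trans hkey hmain
end

section
/- Let b : ℝⁿ → ℝ be Lipschitz with constant ℓ_b, D : ℝⁿ × P → ℝⁿ be C¹ with ‖∂D/∂p‖ ≤ ℓ_D, and p : ℝ≥0 → P be locally Lipschitz with ‖dp(t;1)‖ ≤ c/(ℓ_b ℓ_D) for all t. Then for B(t,x) := b(D(x; p(t))), and any x, u, t, the joint lower Dini derivative satisfies dB(t,x; 1, f(x,u)) ≥ db(D(x;p(t)); (∂D/∂x)(x;p(t))·f(x,u)) − c. -/
open Filter

/-- Joint lower Dini derivative in time (direction 1) and state (direction v). -/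
noncomputable def diniT {E : Type*} [NormedAddCommGroup E] [NormedSpace ℝ E]
    (B : ℝ → E → ℝ) (t : ℝ) (x v : E) : ℝ :=
  Filter.liminf (fun ε : ℝ => (B (t + ε) (x + ε • v) - B t x) / ε) (nhdsWithin 0 (Set.Ioi 0))

set_option maxHeartbeats 2000000 in
theorem diniT_lower_bound {n k : ℕ}
    (b : EuclideanSpace ℝ (Fin n) → ℝ) (ℓb : NNReal) (hb : LipschitzWith ℓb b)
    (D : EuclideanSpace ℝ (Fin n) → EuclideanSpace ℝ (Fin k) → EuclideanSpace ℝ (Fin n))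
    (DDx : EuclideanSpace ℝ (Fin n) → EuclideanSpace ℝ (Fin k) →
      (EuclideanSpace ℝ (Fin n) →L[ℝ] EuclideanSpace ℝ (Fin n)))
    (DDp : EuclideanSpace ℝ (Fin n) → EuclideanSpace ℝ (Fin k) →
      (EuclideanSpace ℝ (Fin k) →L[ℝ] EuclideanSpace ℝ (Fin n)))
    (hDx : ∀ x q, HasFDerivAt (fun y => D y q) (DDx x q) x)
    (hDp : ∀ x q, HasFDerivAt (D x) (DDp x q) q)
    (hC1 : ContDiff ℝ 1 (fun z : EuclideanSpace ℝ (Fin n) × EuclideanSpace ℝ (Fin k) => D z.1 z.2))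
    (ℓD : ℝ) (hℓD : ∀ x q, ‖DDp x q‖ ≤ ℓD)
    (c : ℝ) (hc : 0 < c)
    (p : ℝ → EuclideanSpace ℝ (Fin k)) (p' : ℝ → EuclideanSpace ℝ (Fin k))
    (hp : ∀ t, HasDerivAt p (p' t) t)
    (hp' : ∀ t, ‖p' t‖ ≤ c / (ℓb * ℓD)) :
    ∀ (t : ℝ) (x v : EuclideanSpace ℝ (Fin n)),
      diniT (fun s y => b (D y (p s))) t x v ≥ dini b (D x (p t)) (DDx x (p t) v) - c := by
  intro t x v
  set y := D x (p t) with hy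
  set w := DDx x (p t) v with hw
  set z := DDp x (p t) (p' t) with hz
  set l : Filter ℝ := nhdsWithin 0 (Set.Ioi 0) with hl
  haveI : l.NeBot := by rw [hl]; infer_instance
  -- Lipschitz estimate for b, in norm form
  have hbL : ∀ a a' : EuclideanSpace ℝ (Fin n), |b a - b a'| ≤ (ℓb : ℝ) * ‖a - a'‖ := by
    intro a a'
    have := hb.dist_le_mul a a'
    rwa [Real.dist_eq, dist_eq_norm] at this
  -- key constant bound : ℓb * ‖z‖ ≤ c
  have hzc : (ℓb : ℝ) * ‖z‖ ≤ c := by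
    have h1 : ‖z‖ ≤ ℓD * ‖p' t‖ := (DDp x (p t)).le_opNorm (p' t) |>.trans
      (by gcongr; exact hℓD x (p t))
    have hD0 : (0 : ℝ) ≤ ℓD := le_trans (norm_nonneg _) (hℓD x (p t))
    rcases eq_or_lt_of_le (mul_nonneg (ℓb.coe_nonneg) hD0) with h0 | hpos
    · calc (ℓb : ℝ) * ‖z‖ ≤ (ℓb : ℝ) * (ℓD * ‖p' t‖) := by gcongr
        _ = ((ℓb : ℝ) * ℓD) * ‖p' t‖ := by ring
        _ = 0 := by rw [← h0, zero_mul]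
        _ ≤ c := hc.le
    · calc (ℓb : ℝ) * ‖z‖ ≤ (ℓb : ℝ) * (ℓD * ‖p' t‖) := by gcongr
        _ = ((ℓb : ℝ) * ℓD) * ‖p' t‖ := by ring
        _ ≤ ((ℓb : ℝ) * ℓD) * (c / ((ℓb : ℝ) * ℓD)) :=
            mul_le_mul_of_nonneg_left (hp' t) hpos.le
        _ = c := by field_simp; exact div_self hpos.ne'
  -- total derivative of D at (x, p t)
  set Fd := fderiv ℝ (fun zz : EuclideanSpace ℝ (Fin n) × EuclideanSpace ℝ (Fin k) => D zz.1 zz.2)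
    (x, p t) with hFd
  have hF : HasFDerivAt (fun zz : EuclideanSpace ℝ (Fin n) × EuclideanSpace ℝ (Fin k) =>
      D zz.1 zz.2) Fd (x, p t) :=
    ((hC1.differentiable one_ne_zero) (x, p t)).hasFDerivAt
  have hFv : Fd (v, 0) = w := by
    have h1 : HasFDerivAt (fun yy => D yy (p t))
        (Fd.comp ((ContinuousLinearMap.id ℝ _).prod 0)) x :=
      HasFDerivAt.comp (f := fun yy : EuclideanSpace ℝ (Fin n) => (yy, p t)) x hF ((hasFDerivAt_id x).prodMk (hasFDerivAt_const (p t) x))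
    have h2 := (hDx x (p t)).unique h1
    rw [hw, h2]; rfl
  have hFz : Fd (0, p' t) = z := by
    have h1 : HasFDerivAt (D x)
        (Fd.comp ((0 : EuclideanSpace ℝ (Fin k) →L[ℝ] EuclideanSpace ℝ (Fin n)).prod
          (ContinuousLinearMap.id ℝ _))) (p t) :=
      hF.comp (p t) ((hasFDerivAt_const x (p t)).prodMk (hasFDerivAt_id (p t)))
    have h2 := (hDp x (p t)).unique h1
    rw [hz, h2]; rfl
  -- the curve ε ↦ D (x + ε v, p (t + ε)) has derivative w + z at 0
  have hγ : HasDerivAt (fun ε : ℝ =>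
      ((x + ε • v, p (t + ε)) : EuclideanSpace ℝ (Fin n) × EuclideanSpace ℝ (Fin k)))
      (v, p' t) 0 := by
    apply HasDerivAt.prodMk
    · simpa using ((hasDerivAt_id (0 : ℝ)).smul_const v).const_add x
    · have hf : HasDerivAt (fun ε : ℝ => t + ε) 1 0 := (hasDerivAt_id (0 : ℝ)).const_add t
      have := HasDerivAt.scomp (0 : ℝ) (g₁ := p) (by simpa using hp (t + 0)) hf
      simpa [Function.comp_def] using this
  have hpt : ((x, p t) : EuclideanSpace ℝ (Fin n) × EuclideanSpace ℝ (Fin k)) =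
      (x + (0 : ℝ) • v, p (t + 0)) := by simp
  rw [hpt] at hF
  have hd : HasDerivAt (fun ε : ℝ => D (x + ε • v) (p (t + ε))) (w + z) 0 := by
    have := hF.comp_hasDerivAt 0 hγ
    have hsum : Fd (v, p' t) = w + z := by
      have he : ((v, p' t) : EuclideanSpace ℝ (Fin n) × EuclideanSpace ℝ (Fin k)) =
          (v, 0) + (0, p' t) := by simp
      rw [he, map_add, hFv, hFz]
    rwa [hsum] at this
  set h : ℝ → EuclideanSpace ℝ (Fin n) := fun ε => D (x + ε • v) (p (t + ε)) with hhdef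
  have hh0 : h 0 = y := by simp [hhdef, hy]
  have hslope : Tendsto (slope h 0) (nhdsWithin 0 {(0:ℝ)}ᶜ) (nhds (w + z)) :=
    hasDerivAt_iff_tendsto_slope.mp hd
  -- difference quotients
  set G : ℝ → ℝ := fun ε => (b (y + ε • w) - b y) / ε with hGdef
  set Fq : ℝ → ℝ := fun ε => (b (h ε) - b y) / ε with hFqdef
  have hgoal : dini b y w = Filter.liminf G l := rfl
  have hgoal2 : diniT (fun s yy => b (D yy (p s))) t x v = Filter.liminf Fq l := rfl
  rw [ge_iff_le, sub_le_iff_le_add, hgoal, hgoal2]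
  -- it suffices to prove the bound up to any δ > 0
  refine le_of_forall_pos_le_add fun δ hδ => ?_
  set δ' : ℝ := δ / ((ℓb : ℝ) + 1) with hδ'def
  have hδ' : 0 < δ' := div_pos hδ (by positivity)
  have hℓbδ' : (ℓb : ℝ) * δ' ≤ δ := by
    rw [hδ'def, mul_div_assoc', div_le_iff₀ (by positivity)]
    nlinarith [ℓb.coe_nonneg, hδ.le]
  -- eventual closeness of the slope
  have hev : ∀ᶠ ε in l, ‖slope h 0 ε - (w + z)‖ < δ' := by
    have h1 : ∀ᶠ u in nhdsWithin 0 {(0:ℝ)}ᶜ, ‖slope h 0 u - (w + z)‖ < δ' := by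
      have := hslope (Metric.ball_mem_nhds (w + z) hδ')
      filter_upwards [this] with u hu
      simpa [dist_eq_norm] using hu
    have hle : l ≤ nhdsWithin 0 {(0:ℝ)}ᶜ :=
      nhdsWithin_mono 0 (fun u hu => ne_of_gt hu)
    exact hle h1
  have hmem : ∀ᶠ ε in l, ε ∈ Set.Ioi (0:ℝ) := self_mem_nhdsWithin
  -- main eventual estimate : |Fq ε - G ε| ≤ c + δ
  have hclose : ∀ᶠ ε in l, |Fq ε - G ε| ≤ c + δ := by
    filter_upwards [hev, hmem] with ε hε hεpos
    have hεpos' : (0:ℝ) < ε := hεpos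
    have hsl : slope h 0 ε = ε⁻¹ • (h ε - y) := by
      rw [slope_def_module, hh0, sub_zero]
    have hdiff : Fq ε - G ε = (b (h ε) - b (y + ε • w)) / ε := by
      rw [hFqdef, hGdef]; ring
    have hb1 : |b (h ε) - b (y + ε • w)| ≤ (ℓb : ℝ) * ‖h ε - (y + ε • w)‖ := hbL _ _
    have hnorm : ‖h ε - (y + ε • w)‖ = ε * ‖slope h 0 ε - w‖ := by
      rw [hsl]
      have : ε • (ε⁻¹ • (h ε - y) - w) = h ε - (y + ε • w) := by
        rw [smul_sub, smul_inv_smul₀ (ne_of_gt hεpos')]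
        abel
      rw [← this, norm_smul, Real.norm_eq_abs, abs_of_pos hεpos']
    have hsw : ‖slope h 0 ε - w‖ ≤ ‖z‖ + δ' := by
      have : slope h 0 ε - w = (slope h 0 ε - (w + z)) + z := by abel
      rw [this]
      calc ‖(slope h 0 ε - (w + z)) + z‖ ≤ ‖slope h 0 ε - (w + z)‖ + ‖z‖ := norm_add_le _ _
        _ ≤ ‖z‖ + δ' := by linarith [hε.le]
    obtain ⟨S, hS⟩ : ∃ S, ‖slope h 0 ε - w‖ = S := ⟨_, rfl⟩
    rw [hS] at hsw hnorm
    have hS0 : 0 ≤ S := hS ▸ norm_nonneg _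
    calc |Fq ε - G ε| = |b (h ε) - b (y + ε • w)| / ε := by
          rw [hdiff, abs_div, abs_of_pos hεpos']
      _ ≤ ((ℓb : ℝ) * (ε * S)) / ε := by
          rw [← hnorm]; gcongr
      _ = (ℓb : ℝ) * S := by
          rw [div_eq_iff (ne_of_gt hεpos')]; ring
      _ ≤ (ℓb : ℝ) * (‖z‖ + δ') := mul_le_mul_of_nonneg_left hsw ℓb.coe_nonneg
      _ = (ℓb : ℝ) * ‖z‖ + (ℓb : ℝ) * δ' := mul_add _ _ _
      _ ≤ c + δ := add_le_add hzc hℓbδ'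
  -- bound on G
  have hGb : ∀ᶠ ε in l, |G ε| ≤ (ℓb : ℝ) * ‖w‖ := by
    filter_upwards [hmem] with ε hεpos
    have hεpos' : (0:ℝ) < ε := hεpos
    have h1 : |b (y + ε • w) - b y| ≤ (ℓb : ℝ) * ‖y + ε • w - y‖ := hbL _ _
    have h2 : ‖y + ε • w - y‖ = ε * ‖w‖ := by
      simp [norm_smul, Real.norm_eq_abs, abs_of_pos hεpos']
    calc |G ε| = |b (y + ε • w) - b y| / ε := by
          rw [hGdef, abs_div, abs_of_pos hεpos']
      _ ≤ ((ℓb : ℝ) * (ε * ‖w‖)) / ε := by rw [← h2]; gcongr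
      _ = (ℓb : ℝ) * ‖w‖ := by field_simp
  -- boundedness facts
  have hFub : ∀ᶠ ε in l, Fq ε ≤ (ℓb : ℝ) * ‖w‖ + (c + δ) := by
    filter_upwards [hclose, hGb] with ε h1 h2
    linarith [(abs_le.mp h1).2, (abs_le.mp h2).2]
  have hFlb : ∀ᶠ ε in l, -((ℓb : ℝ) * ‖w‖) - (c + δ) ≤ Fq ε := by
    filter_upwards [hclose, hGb] with ε h1 h2
    linarith [(abs_le.mp h1).1, (abs_le.mp h2).1]
  have bFq_above : l.IsBoundedUnder (· ≤ ·) Fq := ⟨(ℓb : ℝ) * ‖w‖ + (c + δ), by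
    rwa [eventually_map]⟩
  have bFq_below : l.IsBoundedUnder (· ≥ ·) Fq := ⟨-((ℓb : ℝ) * ‖w‖) - (c + δ), by
    rwa [eventually_map]⟩
  have cFq : l.IsCoboundedUnder (· ≥ ·) Fq := bFq_above.isCoboundedUnder_ge
  have bG_below : l.IsBoundedUnder (· ≥ ·) G := ⟨-((ℓb : ℝ) * ‖w‖), by
    rw [eventually_map]; filter_upwards [hGb] with ε hε; linarith [(abs_le.mp hε).1]⟩
  -- liminf arithmetic
  have hkey : Filter.liminf (fun ε => Fq ε + (c + δ)) l = Filter.liminf Fq l + (c + δ) :=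
    liminf_add_const l Fq (c + δ) cFq bFq_below
  have hcFqc : l.IsCoboundedUnder (· ≥ ·) (fun ε => Fq ε + (c + δ)) := by
    apply Filter.IsBoundedUnder.isCoboundedUnder_ge
    exact ⟨(ℓb : ℝ) * ‖w‖ + (c + δ) + (c + δ), by
      rw [eventually_map]; filter_upwards [hFub] with ε hε; linarith⟩
  have hmono : Filter.liminf G l ≤ Filter.liminf (fun ε => Fq ε + (c + δ)) l := by
    apply liminf_le_liminf _ bG_below hcFqc
    filter_upwards [hclose] with ε hε
    linarith [(abs_le.mp hε).1]
  calc Filter.liminf G l ≤ Filter.liminf Fq l + (c + δ) := hkey ▸ hmono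
    _ = Filter.liminf Fq l + c + δ := by ring
end
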